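/- For all m, n ≥ 0, the number s(m,n) of saturated covers on the grid [m] × [n] satisfies s(m,n) = Σ_{j=2}^{m+2} (−1)^{m−j} · S(m+1, j−1) · (j!/2) · j^n, where S(ℓ,k) denotes the Stirling number of the second kind. -/

import Mathlib

/-- A saturated cover on the grid `[m] × [n] = {0,…,m} × {0,…,n}`.
`H i j = true` means the horizontal edge `(i,j) → (i+1,j)` is present (valid for `i < m`, `j ≤ n`);
`V i j = true` means the vertical edge `(i,j) → (i,j+1)` is present (valid for `i ≤ m`, `j < n`). -/
structure SatCover (m n : ℕ) where
  H : ℕ → ℕ → Bool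
  V : ℕ → ℕ → Bool
  H_bound : ∀ i j, H i j = true → i < m ∧ j ≤ n
  V_bound : ∀ i j, V i j = true → i ≤ m ∧ j < n
  H_down : ∀ i j k, k < j → H i j = true → H i k = true
  V_left : ∀ i j k, k < i → V i j = true → V k j = true
  sq₁ : ∀ i j, H i j = true → H i (j+1) = true → V i j = true → V (i+1) j = true
  sq₂ : ∀ i j, H i j = true → H i (j+1) = true → V (i+1) j = true → V i j = true
  sq₃ : ∀ i j, H i j = true → V i j = true → V (i+1) j = true → H i (j+1) = true
  sq₄ : ∀ i j, H i (j+1) = true → V i j = true → V (i+1) j = true → H i j = true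

/-- `satCount m n` is the number of saturated covers on `[m] × [n]`. -/
noncomputable def satCount (m n : ℕ) : ℕ := Nat.card (SatCover m n)
/-- Stirling numbers of the second kind: `stirling ℓ k` is the number of partitions of an
`ℓ`-element set into `k` nonempty blocks. -/
def stirling : ℕ → ℕ → ℕ
  | 0, 0 => 1
  | 0, _ + 1 => 0
  | _ + 1, 0 => 0
  | l + 1, k + 1 => (k + 1) * stirling l (k + 1) + stirling l k


namespace SatAux
open Finset

lemma stirling_zero (l : ℕ) : stirling (l+1) 0 = 0 := rfl

lemma stirling_succ (l k : ℕ) :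
    stirling (l+1) (k+1) = (k+1) * stirling l (k+1) + stirling l k := rfl

lemma stirling_one (l : ℕ) : stirling (l+1) 1 = 1 := by
  induction l with
  | zero => rfl
  | succ l ih => rw [stirling_succ, ih, stirling_zero]

lemma stirling_eq_zero : ∀ l k, l < k → stirling l k = 0 := by
  intro l
  induction l with
  | zero => intro k hk; match k, hk with | k+1, _ => rfl
  | succ l ih =>
    intro k hk
    match k, hk with
    | k+1, hk =>
      rw [stirling_succ, ih (k+1) (by omega), ih k (by omega)]
      ring

/-- `D r j = S(r+2,j) - S(r+1,j)`. -/
def D (r j : ℕ) : ℤ := (stirling (r+2) j : ℤ) - stirling (r+1) j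

lemma D_zero (r : ℕ) : D r 0 = 0 := by simp [D, stirling_zero]

lemma D_one (r : ℕ) : D r 1 = 0 := by simp [D, stirling_one]

lemma D_rec (r j : ℕ) : D (r+1) (j+1) = (j+1) * D r (j+1) + D r j := by
  simp only [D, stirling_succ]
  push_cast
  ring

lemma D_eq_zero {r j : ℕ} (h : r + 2 < j) : D r j = 0 := by
  simp [D, stirling_eq_zero _ _ h, stirling_eq_zero (r+1) j (by omega)]

section Generic

variable (c : ℕ → ℕ → ℤ) (e : ℤ)

/-- generic alternating sum against `D`. -/
def Tsum (m j : ℕ) : ℤ := ∑ u ∈ range (m+1), (-1:ℤ)^u * c m u * D (m-u) j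

lemma Tsum_zero (m : ℕ) : Tsum c m 0 = 0 := by
  unfold Tsum
  rw [Finset.sum_congr rfl (fun u _ => by rw [D_zero, mul_zero]), sum_const_zero]

variable (hrec : ∀ m u, c (m+1) (u+1) = c m (u+1) + c m u)
  (h0 : ∀ m, c (m+1) 0 = c m 0 + e)
  (htop : ∀ m, c m (m+1) = 0)

include hrec h0 htop in
lemma Tsum_step (m j : ℕ) :
    Tsum c (m+1) j
      = e * D (m+1) j + (∑ u ∈ range (m+1), (-1:ℤ)^u * c m u * D ((m-u)+1) j)
        - Tsum c m j := by
  have hS2 : ∑ u ∈ range (m+1), (-1:ℤ)^u * c m u * D ((m-u)+1) j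
      = (∑ u ∈ range (m+1), (-1:ℤ)^(u+1) * c m (u+1) * D (m-u) j) + c m 0 * D (m+1) j := by
    have h1 : ∑ u ∈ range (m+2), (-1:ℤ)^u * c m u * D ((m+1-u)) j
        = ∑ u ∈ range (m+1), (-1:ℤ)^u * c m u * D ((m-u)+1) j := by
      rw [sum_range_succ, htop]
      rw [Finset.sum_congr rfl (fun u hu => by
        simp only [mem_range] at hu
        rw [(by omega : m + 1 - u = (m-u)+1)])]
      ring
    have h2 : ∑ u ∈ range (m+2), (-1:ℤ)^u * c m u * D ((m+1-u)) j
        = (∑ u ∈ range (m+1), (-1:ℤ)^(u+1) * c m (u+1) * D (m-u) j) + c m 0 * D (m+1) j := by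
      rw [sum_range_succ' (fun u => (-1:ℤ)^u * c m u * D (m+1-u) j) (m+1)]
      simp only [pow_zero, one_mul, Nat.sub_zero]
      congr 1
      exact Finset.sum_congr rfl (fun u hu => by rw [(by omega : m + 1 - (u+1) = m - u)])
    rw [← h1, h2]
  have hT : Tsum c (m+1) j
      = (∑ u ∈ range (m+1), (-1:ℤ)^(u+1) * (c m (u+1) + c m u) * D (m-u) j)
        + (c m 0 + e) * D (m+1) j := by
    unfold Tsum
    rw [sum_range_succ' (fun u => (-1:ℤ)^u * c (m+1) u * D (m+1-u) j) (m+1)]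
    simp only [pow_zero, one_mul, Nat.sub_zero, h0]
    congr 1
    exact Finset.sum_congr rfl (fun u hu => by
      rw [hrec, (by omega : m + 1 - (u+1) = m - u)])
  have hsplit2 : ∑ u ∈ range (m+1), (-1:ℤ)^(u+1) * (c m (u+1) + c m u) * D (m-u) j
      = (∑ u ∈ range (m+1), (-1:ℤ)^(u+1) * c m (u+1) * D (m-u) j)
        + (- Tsum c m j) := by
    unfold Tsum
    rw [← Finset.sum_neg_distrib, ← sum_add_distrib]
    exact Finset.sum_congr rfl (fun u _ => by ring)
  rw [hT, hS2, hsplit2]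
  ring

include hrec h0 htop in
lemma Tsum_step' (m j : ℕ) :
    Tsum c (m+1) (j+1)
      = e * D (m+1) (j+1) + ((j+1) * Tsum c m (j+1) + Tsum c m j) - Tsum c m (j+1) := by
  rw [Tsum_step c e hrec h0 htop m (j+1)]
  congr 2
  have : ∀ u ∈ range (m+1), (-1:ℤ)^u * c m u * D ((m-u)+1) (j+1)
      = ((j:ℤ)+1) * ((-1:ℤ)^u * c m u * D (m-u) (j+1)) + ((-1:ℤ)^u * c m u * D (m-u) j) := by
    intro u _
    rw [D_rec]
    ring
  rw [Finset.sum_congr rfl this, sum_add_distrib, ← mul_sum]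
  unfold Tsum
  ring

end Generic

/-- coefficient `A m u = C(m+1,u+1) + C(m,u)` -/
def Ac (m u : ℕ) : ℤ := ((m+1).choose (u+1) : ℤ) + (m.choose u : ℤ)

lemma Ac_rec (m u : ℕ) : Ac (m+1) (u+1) = Ac m (u+1) + Ac m u := by
  simp only [Ac, Nat.choose_succ_succ (m+1) (u+1), Nat.choose_succ_succ m u]
  push_cast [Nat.choose_succ_succ]
  ring

lemma Ac_zero (m : ℕ) : Ac (m+1) 0 = Ac m 0 + 1 := by
  have h1 : (m+2).choose 1 = m+2 := Nat.choose_one_right _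
  have h2 : (m+1).choose 1 = m+1 := Nat.choose_one_right _
  simp only [Ac, zero_add, Nat.choose_zero_right, h1, h2]
  push_cast
  ring

lemma Ac_top (m : ℕ) : Ac m (m+1) = 0 := by
  simp [Ac, Nat.choose_eq_zero_of_lt (by omega : m+1 < m+2),
    Nat.choose_eq_zero_of_lt (by omega : m < m+1)]

/-- Key identity (I*). -/
lemma Istar : ∀ m j, Tsum Ac m j = j * D m j := by
  intro m
  induction m with
  | zero =>
    intro j
    have : Tsum Ac 0 j = 2 * D 0 j := by
      unfold Tsum
      rw [range_one, sum_singleton]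
      have : Ac 0 0 = 2 := by norm_num [Ac]
      rw [this]
      norm_num
    rw [this]
    match j with
    | 0 => rw [D_zero]; ring
    | 1 => rw [D_one]; ring
    | 2 => norm_num
    | (j+3) => rw [D_eq_zero (by omega)]; ring
  | succ m ih =>
    intro j
    match j with
    | 0 => rw [Tsum_zero, D_zero]; ring
    | (j+1) =>
      rw [Tsum_step' Ac 1 Ac_rec Ac_zero Ac_top m j, ih (j+1), ih j, D_rec]
      push_cast
      ring

def Cc (m u : ℕ) : ℤ := (m.choose u : ℤ)

lemma Cc_rec (m u : ℕ) : Cc (m+1) (u+1) = Cc m (u+1) + Cc m u := by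
  simp only [Cc, Nat.choose_succ_succ m u]
  push_cast
  ring

lemma Cc_zero (m : ℕ) : Cc (m+1) 0 = Cc m 0 + 0 := by simp [Cc]

lemma Cc_top (m : ℕ) : Cc m (m+1) = 0 := by
  simp [Cc, Nat.choose_eq_zero_of_lt (by omega : m < m+1)]

/-- (A4'): alternating binomial transform of `D` gives Stirling. -/
lemma binom_D : ∀ m j, Tsum Cc m j = (stirling (m+1) (j-1) : ℤ) := by
  intro m
  induction m with
  | zero =>
    intro j
    have : Tsum Cc 0 j = D 0 j := by
      unfold Tsum
      rw [range_one, sum_singleton]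
      have : Cc 0 0 = 1 := by norm_num [Cc]
      rw [this]
      norm_num
    rw [this]
    match j with
    | 0 => rw [D_zero]; norm_num [show stirling (0+1) (0-1) = 0 from rfl]
    | 1 => rw [D_one]; norm_num [show stirling (0+1) (1-1) = 0 from rfl]
    | 2 => norm_num [show stirling (0+1) (2-1) = 1 from rfl, show D 0 2 = 1 from rfl]
    | (j+3) =>
      rw [D_eq_zero (by omega)]
      have hz : stirling (0+1) (j+3-1) = 0 := stirling_eq_zero _ _ (by omega)
      rw [hz]
      norm_num
  | succ m ih =>
    intro j
    match j with
    | 0 =>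
      rw [Tsum_zero]
      have hz : stirling (m+1+1) (0-1) = 0 := stirling_zero _
      rw [hz]
      norm_num
    | (j+1) =>
      rw [Tsum_step' Cc 0 Cc_rec Cc_zero Cc_top m j, ih (j+1), ih j]
      simp only [Nat.add_sub_cancel]
      match j with
      | 0 =>
        rw [D_one]
        simp [stirling_zero, stirling_one]
      | (j+1) =>
        rw [D_rec]
        have h2 : stirling (m+2) (j+1) = (j+1) * stirling (m+1) (j+1) + stirling (m+1) j :=
          stirling_succ (m+1) j
        simp only [Nat.add_sub_cancel, h2]
        push_cast
        ring

/-- alternating factorial-Stirling sum. -/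
lemma altfub : ∀ l, ∑ j ∈ range (l+1), (-1:ℤ)^j * (j.factorial : ℤ) * stirling l j = (-1)^l := by
  intro l
  induction l with
  | zero => simp [stirling]
  | succ l ih =>
    have hW : ∑ j ∈ range (l+2), (-1:ℤ)^j * (j.factorial : ℤ) * j * stirling l j
        = ∑ j ∈ range (l+1), (-1:ℤ)^(j+1) * ((j+1).factorial : ℤ) * (j+1) * stirling l (j+1) := by
      rw [sum_range_succ' (fun j => (-1:ℤ)^j * (j.factorial : ℤ) * j * stirling l j) (l+1)]
      simp
    have hWtop : ∑ j ∈ range (l+2), (-1:ℤ)^j * (j.factorial : ℤ) * j * stirling l j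
        = ∑ j ∈ range (l+1), (-1:ℤ)^j * (j.factorial : ℤ) * j * stirling l j := by
      rw [sum_range_succ, stirling_eq_zero l (l+1) (by omega)]
      norm_num
    have key : ∑ j ∈ range (l+2), (-1:ℤ)^j * (j.factorial : ℤ) * stirling (l+1) j
        = ∑ j ∈ range (l+1), (-1:ℤ)^(j+1) * ((j+1).factorial : ℤ) * stirling (l+1) (j+1) := by
      rw [sum_range_succ' (fun j => (-1:ℤ)^j * (j.factorial : ℤ) * stirling (l+1) j) (l+1)]
      simp [stirling_zero]
    rw [key]
    have expand : ∀ j ∈ range (l+1),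
        (-1:ℤ)^(j+1) * ((j+1).factorial : ℤ) * stirling (l+1) (j+1)
        = -((-1:ℤ)^(j+1) * ((j+1).factorial : ℤ) * (j+1) * stirling l (j+1))
            * (-1) + (-((-1:ℤ)^j * (j.factorial : ℤ) * (j+1) * stirling l j)) := by
      intro j _
      rw [stirling_succ]
      push_cast [Nat.factorial_succ]
      ring
    rw [Finset.sum_congr rfl expand, sum_add_distrib]
    have h1 : ∑ j ∈ range (l+1),
        -((-1:ℤ)^(j+1) * ((j+1).factorial : ℤ) * (j+1) * stirling l (j+1)) * (-1)
        = ∑ j ∈ range (l+1), (-1:ℤ)^(j+1) * ((j+1).factorial : ℤ) * (j+1) * stirling l (j+1) := by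
      exact Finset.sum_congr rfl (fun j _ => by ring)
    have h2 : ∑ j ∈ range (l+1), (-((-1:ℤ)^j * (j.factorial : ℤ) * (j+1) * stirling l j))
        = -(∑ j ∈ range (l+1), (-1:ℤ)^j * (j.factorial : ℤ) * j * stirling l j)
          - ∑ j ∈ range (l+1), (-1:ℤ)^j * (j.factorial : ℤ) * stirling l j := by
      rw [← Finset.sum_neg_distrib, ← sum_sub_distrib]
      exact Finset.sum_congr rfl (fun j _ => by ring)
    rw [h1, h2, ← hW, hWtop, ih]
    ring

/-- `w j = j!/2`. -/
def wf (j : ℕ) : ℤ := ((Nat.factorial j / 2 : ℕ) : ℤ)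

lemma two_wf {j : ℕ} (h : 2 ≤ j) : 2 * wf j = (j.factorial : ℤ) := by
  unfold wf
  have : 2 ∣ j.factorial := Nat.dvd_factorial (by omega) h
  rw [mul_comm]
  exact_mod_cast Nat.div_mul_cancel this

def qf (r n : ℕ) : ℤ := ∑ j ∈ range (r+3), (-1:ℤ)^(r+j) * wf j * D r j * (j:ℤ)^n

lemma qf_pad (r n N : ℕ) (h : r+3 ≤ N) :
    qf r n = ∑ j ∈ range N, (-1:ℤ)^(r+j) * wf j * D r j * (j:ℤ)^n := by
  unfold qf
  refine Finset.sum_subset (by simp [Finset.range_subset_range.mpr h]) ?_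
  intro j hj hnj
  simp only [mem_range] at hj hnj
  rw [D_eq_zero (by omega)]
  ring

lemma qf_zero (r : ℕ) : qf r 0 = 1 := by
  have h2 : (2:ℤ) * qf r 0 = 2 := by
    unfold qf
    rw [mul_sum]
    have step : ∀ j ∈ range (r+3), (2:ℤ) * ((-1:ℤ)^(r+j) * wf j * D r j * (j:ℤ)^0)
        = (-1:ℤ)^r * ((-1:ℤ)^j * (j.factorial : ℤ) * stirling (r+2) j)
          - (-1:ℤ)^r * ((-1:ℤ)^j * (j.factorial : ℤ) * stirling (r+1) j) := by
      intro j _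
      match j with
      | 0 => rw [D_zero]; simp [stirling_zero]
      | 1 => rw [D_one]; simp [stirling_one]
      | (j+2) =>
        have hw := two_wf (by omega : 2 ≤ j+2)
        unfold D
        rw [pow_zero, pow_add]
        linear_combination ((-1:ℤ)^r * (-1:ℤ)^(j+2) *
          ((stirling (r+2) (j+2) : ℤ) - (stirling (r+1) (j+2) : ℤ))) * hw
    rw [Finset.sum_congr rfl step, sum_sub_distrib, ← mul_sum, ← mul_sum]
    have e1 : ∑ j ∈ range (r+3), (-1:ℤ)^j * (j.factorial : ℤ) * stirling (r+2) j
        = (-1:ℤ)^(r+2) := altfub (r+2)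
    have e2 : ∑ j ∈ range (r+3), (-1:ℤ)^j * (j.factorial : ℤ) * stirling (r+1) j
        = (-1:ℤ)^(r+1) := by
      rw [sum_range_succ, stirling_eq_zero (r+1) (r+2) (by omega)]
      rw [show ((0:ℕ):ℤ) = 0 from rfl, mul_zero, add_zero]
      exact altfub (r+1)
    rw [e1, e2]
    have hsq : (-1:ℤ)^r * (-1:ℤ)^r = 1 := by
      rw [← pow_add]
      exact Even.neg_one_pow ⟨r, by ring⟩
    rw [pow_add, pow_add]
    linear_combination 2 * hsq
  linarith

def gv (m s n : ℕ) : ℤ := ∑ u ∈ range (s+1), (s.choose u : ℤ) * qf (m-u) n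

lemma gv_base (m s : ℕ) : gv m s 0 = 2^s := by
  unfold gv
  rw [Finset.sum_congr rfl (fun u _ => by rw [qf_zero, mul_one])]
  rw [← Nat.cast_sum]
  rw [Nat.sum_range_choose]
  push_cast
  ring

lemma gv_V1 (m s n : ℕ) : gv (m+1) (s+1) n = gv (m+1) s n + gv m s n := by
  have htop : ∑ u ∈ range (s+1), ((s.choose (u+1) : ℕ) : ℤ) * qf (m-u) n
      = ∑ u ∈ range s, ((s.choose (u+1) : ℕ) : ℤ) * qf (m-u) n := by
    rw [sum_range_succ, Nat.choose_succ_self, Nat.cast_zero, zero_mul, add_zero]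
  have hgv : ∑ u ∈ range (s+1), ((s.choose u : ℕ) : ℤ) * qf (m+1-u) n
      = ∑ u ∈ range s, ((s.choose (u+1) : ℕ) : ℤ) * qf (m-u) n + qf (m+1) n := by
    rw [sum_range_succ' (fun u => ((s.choose u : ℕ) : ℤ) * qf (m+1-u) n) s]
    simp only [Nat.choose_zero_right, Nat.cast_one, one_mul, Nat.sub_zero]
    congr 1
    exact Finset.sum_congr rfl (fun u _ => by rw [(by omega : m+1-(u+1) = m-u)])
  unfold gv
  rw [sum_range_succ' (fun u => (((s+1).choose u : ℕ) : ℤ) * qf (m+1-u) n) (s+1)]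
  simp only [Nat.choose_zero_right, Nat.cast_one, one_mul, Nat.sub_zero]
  have expand : ∀ u ∈ range (s+1), (((s+1).choose (u+1) : ℕ) : ℤ) * qf (m+1-(u+1)) n
      = ((s.choose (u+1) : ℕ) : ℤ) * qf (m-u) n + ((s.choose u : ℕ) : ℤ) * qf (m-u) n := by
    intro u _
    rw [Nat.choose_succ_succ, (by omega : m+1-(u+1) = m-u)]
    push_cast
    ring
  rw [Finset.sum_congr rfl expand, sum_add_distrib, htop, hgv]
  ring

lemma sum_range_choose_eq (m u : ℕ) :
    ∑ k ∈ range (m+1), k.choose u = (m+1).choose (u+1) := by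
  induction m with
  | zero =>
    match u with
    | 0 => rfl
    | u+1 =>
      rw [Finset.sum_range_one, Nat.choose_eq_zero_of_lt (by omega),
        Nat.choose_eq_zero_of_lt (by omega)]
  | succ m ih =>
    rw [sum_range_succ, ih, Nat.choose_succ_succ (m+1) u, Nat.add_comm]

lemma gv_V2 (m n : ℕ) :
    qf m (n+1) = gv m m n + ∑ k ∈ range (m+1), gv m (m-k) n := by
  have hpad : ∀ k ∈ range (m+1), gv m (m-k) n
      = ∑ u ∈ range (m+1), (((m-k).choose u : ℕ) : ℤ) * qf (m-u) n := by
    intro k hk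
    simp only [mem_range] at hk
    unfold gv
    refine Finset.sum_subset (Finset.range_subset_range.mpr (by omega)) ?_
    intro u hu hnu
    simp only [mem_range] at hu hnu
    rw [Nat.choose_eq_zero_of_lt (by omega)]
    norm_num
  rw [Finset.sum_congr rfl hpad, Finset.sum_comm]
  have hinner : ∀ u ∈ range (m+1),
      ∑ k ∈ range (m+1), (((m-k).choose u : ℕ) : ℤ) * qf (m-u) n
      = (((m+1).choose (u+1) : ℕ) : ℤ) * qf (m-u) n := by
    intro u _
    rw [← Finset.sum_mul]
    congr 1
    rw [← Nat.cast_sum]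
    congr 1
    have hrefl : ∑ k ∈ range (m+1), (m-k).choose u
        = ∑ k ∈ range (m+1), k.choose u := by
      rw [← Finset.sum_range_reflect (fun k => k.choose u) (m+1)]
      exact Finset.sum_congr rfl (fun k hk => by
        simp only [mem_range] at hk
        rw [(by omega : m + 1 - 1 - k = m - k)])
    rw [hrefl, sum_range_choose_eq]
  rw [Finset.sum_congr rfl hinner]
  unfold gv
  rw [← sum_add_distrib]
  have hAc : ∀ u ∈ range (m+1),
      ((m.choose u : ℕ) : ℤ) * qf (m-u) n + (((m+1).choose (u+1) : ℕ) : ℤ) * qf (m-u) n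
      = Ac m u * qf (m-u) n := by
    intro u _
    unfold Ac
    ring
  rw [Finset.sum_congr rfl hAc]
  have hq : ∀ u ∈ range (m+1), Ac m u * qf (m-u) n
      = ∑ j ∈ range (m+3), (-1:ℤ)^(m+j) * ((-1:ℤ)^u * Ac m u * D (m-u) j) * wf j * (j:ℤ)^n := by
    intro u hu
    simp only [mem_range] at hu
    rw [qf_pad (m-u) n (m+3) (by omega), mul_sum]
    refine Finset.sum_congr rfl (fun j _ => ?_)
    have hsgn : (-1:ℤ)^(m-u+j) * ((-1:ℤ)^u * (-1:ℤ)^u) = (-1:ℤ)^(m+j) * (-1:ℤ)^u := by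
      rw [← pow_add, ← pow_add, ← pow_add]
      congr 1
      omega
    have hu2 : (-1:ℤ)^u * (-1:ℤ)^u = 1 := by
      rw [← pow_add]
      exact Even.neg_one_pow ⟨u, by ring⟩
    rw [hu2, mul_one] at hsgn
    rw [hsgn]
    ring
  rw [Finset.sum_congr rfl hq, Finset.sum_comm]
  have hIstar : ∀ j ∈ range (m+3),
      ∑ u ∈ range (m+1), (-1:ℤ)^(m+j) * ((-1:ℤ)^u * Ac m u * D (m-u) j) * wf j * (j:ℤ)^n
      = (-1:ℤ)^(m+j) * wf j * D m j * (j:ℤ)^(n+1) := by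
    intro j _
    have : ∑ u ∈ range (m+1), (-1:ℤ)^(m+j) * ((-1:ℤ)^u * Ac m u * D (m-u) j) * wf j * (j:ℤ)^n
        = ((-1:ℤ)^(m+j) * wf j * (j:ℤ)^n) * Tsum Ac m j := by
      unfold Tsum
      rw [mul_sum]
      exact Finset.sum_congr rfl (fun u _ => by ring)
    rw [this, Istar]
    rw [pow_succ]
    ring
  rw [Finset.sum_congr rfl hIstar]
  unfold qf
  rfl

lemma gv_final (m n : ℕ) :
    gv m m n = ∑ j ∈ Finset.Icc 2 (m+2),
      (-1:ℤ)^(m+j) * (stirling (m+1) (j-1) : ℤ) * wf j * (j:ℤ)^n := by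
  unfold gv
  have hq : ∀ u ∈ range (m+1), ((m.choose u : ℕ) : ℤ) * qf (m-u) n
      = ∑ j ∈ range (m+3), (-1:ℤ)^(m+j) * ((-1:ℤ)^u * Cc m u * D (m-u) j) * wf j * (j:ℤ)^n := by
    intro u hu
    simp only [mem_range] at hu
    rw [qf_pad (m-u) n (m+3) (by omega), mul_sum]
    refine Finset.sum_congr rfl (fun j _ => ?_)
    have hu2 : (-1:ℤ)^u * (-1:ℤ)^u = 1 := by
      rw [← pow_add]
      exact Even.neg_one_pow ⟨u, by ring⟩
    have hsgn : (-1:ℤ)^(m-u+j) * ((-1:ℤ)^u * (-1:ℤ)^u) = (-1:ℤ)^(m+j) * (-1:ℤ)^u := by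
      rw [← pow_add, ← pow_add, ← pow_add]
      congr 1
      omega
    rw [hu2, mul_one] at hsgn
    rw [hsgn]
    unfold Cc
    ring
  rw [Finset.sum_congr rfl hq, Finset.sum_comm]
  have hB : ∀ j ∈ range (m+3),
      ∑ u ∈ range (m+1), (-1:ℤ)^(m+j) * ((-1:ℤ)^u * Cc m u * D (m-u) j) * wf j * (j:ℤ)^n
      = (-1:ℤ)^(m+j) * (stirling (m+1) (j-1) : ℤ) * wf j * (j:ℤ)^n := by
    intro j _
    have : ∑ u ∈ range (m+1), (-1:ℤ)^(m+j) * ((-1:ℤ)^u * Cc m u * D (m-u) j) * wf j * (j:ℤ)^n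
        = ((-1:ℤ)^(m+j) * wf j * (j:ℤ)^n) * Tsum Cc m j := by
      unfold Tsum
      rw [mul_sum]
      exact Finset.sum_congr rfl (fun u _ => by ring)
    rw [this, binom_D]
    ring
  rw [Finset.sum_congr rfl hB]
  symm
  refine Finset.sum_subset ?_ ?_
  · intro j hj
    simp only [Finset.mem_Icc] at hj
    simp only [mem_range]
    omega
  · intro j hj hnj
    simp only [mem_range] at hj
    simp only [Finset.mem_Icc] at hnj
    have hj01 : j = 0 ∨ j = 1 := by omega
    have hz : stirling (m+1) (j-1) = 0 := by
      rcases hj01 with h | h <;> subst h <;> exact stirling_zero m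
    rw [hz]
    norm_num



def Ok (m n : ℕ) (h : Fin m → Fin (n+2)) (v : Fin n → Fin (m+2)) : Prop :=
  ∀ (i : Fin m) (j : Fin n),
    ((h i : ℕ) = (j : ℕ) + 1 → (v j : ℕ) ≤ (i : ℕ) + 1) ∧
    ((v j : ℕ) = (i : ℕ) + 1 → (h i : ℕ) ≤ (j : ℕ) + 1)

def Cfg (m n : ℕ) (T : Finset (Fin m)) : Type :=
  {p : (Fin m → Fin (n+2)) × (Fin n → Fin (m+2)) //
    Ok m n p.1 p.2 ∧ ∀ i ∈ T, (p.1 i : ℕ) ≤ n}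

instance cfgFinite (m n : ℕ) (T : Finset (Fin m)) : Finite (Cfg m n T) := by
  unfold Cfg; infer_instance

lemma card_sigma_fin {k : ℕ} (β : Fin k → Type) [∀ x, Finite (β x)] :
    Nat.card (Σ x, β x) = ∑ x, Nat.card (β x) := by
  classical
  have I : ∀ x, Fintype (β x) := fun x => Fintype.ofFinite _
  simp only [Nat.card_eq_fintype_card, Fintype.card_sigma]

/-- Base case: `n = 0`. -/
lemma card_cfg_zero (m : ℕ) (T : Finset (Fin m)) :
    Nat.card (Cfg m 0 T) = 2 ^ (m - T.card) := by
  classical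
  have e1 : Cfg m 0 T ≃ {f : Fin m → Fin 2 // ∀ i ∈ T, (f i : ℕ) ≤ 0} :=
    { toFun := fun c => ⟨c.1.1, c.2.2⟩
      invFun := fun f => ⟨(f.1, Fin.elim0), ⟨fun i j => j.elim0, f.2⟩⟩
      left_inv := fun c => by
        apply Subtype.ext
        apply Prod.ext
        · rfl
        · funext j; exact j.elim0
      right_inv := fun f => rfl }
  have e2 : {f : Fin m → Fin 2 // ∀ i ∈ T, (f i : ℕ) ≤ 0} ≃ ({i : Fin m // i ∉ T} → Fin 2) :=
    { toFun := fun f s => f.1 s.1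
      invFun := fun g => ⟨fun i => if h : i ∈ T then 0 else g ⟨i, h⟩,
        fun i hi => by simp [hi]⟩
      left_inv := fun f => by
        apply Subtype.ext
        funext i
        by_cases h : i ∈ T
        · simp only [h, dif_pos]
          have := f.2 i h
          have h2 := (f.1 i).isLt
          symm
          apply Fin.ext
          simpa using this
        · simp [h]
      right_inv := fun g => by
        funext s
        simp [s.2] }
  rw [Nat.card_congr (e1.trans e2)]
  rw [Nat.card_eq_fintype_card, Fintype.card_fun]
  congr 1
  rw [Fintype.card_subtype_compl, Fintype.card_coe, Fintype.card_fin]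

/-- Split at a free row. -/
lemma card_split (m n : ℕ) (T : Finset (Fin m)) (i₀ : Fin m) (hi₀ : i₀ ∉ T) :
    Nat.card (Cfg m n T)
      = Nat.card (Cfg m n (insert i₀ T))
        + Nat.card {c : Cfg m n T // (c.1.1 i₀ : ℕ) = n + 1} := by
  classical
  rw [Nat.card_congr (Equiv.sumCompl (fun c : Cfg m n T => (c.1.1 i₀ : ℕ) ≤ n)).symm,
    Nat.card_sum]
  congr 1
  · refine Nat.card_congr ⟨fun c => ⟨c.1.1, ⟨c.1.2.1, ?_⟩⟩,
      fun c => ⟨⟨c.1, c.2.1, fun i hi => c.2.2 i (Finset.mem_insert_of_mem hi)⟩,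
        c.2.2 i₀ (Finset.mem_insert_self _ _)⟩, fun c => rfl, fun c => rfl⟩
    intro i hi
    rcases Finset.mem_insert.mp hi with h | h
    · subst h; exact c.2
    · exact c.1.2.2 i h
  · apply Nat.card_congr (Equiv.subtypeEquivRight _)
    intro c
    have := (c.1.1 i₀).isLt
    constructor <;> intro h <;> omega

section Remove

variable {m : ℕ} (i₀ : Fin (m+1))

/-- value relabeling deleting `i₀+1`. -/
def rho (x : Fin (m+3)) : Fin (m+2) :=
  if h : (x:ℕ) ≤ (i₀:ℕ) then ⟨(x:ℕ), by omega⟩ else ⟨(x:ℕ)-1, by have := x.isLt; omega⟩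

def sig (y : Fin (m+2)) : Fin (m+3) :=
  if h : (y:ℕ) ≤ (i₀:ℕ) then ⟨(y:ℕ), by omega⟩ else ⟨(y:ℕ)+1, by have := y.isLt; omega⟩

lemma rho_coe (x : Fin (m+3)) :
    ((rho i₀ x : Fin (m+2)) : ℕ) = if (x:ℕ) ≤ (i₀:ℕ) then (x:ℕ) else (x:ℕ)-1 := by
  unfold rho; split_ifs <;> rfl

lemma sig_coe (y : Fin (m+2)) :
    ((sig i₀ y : Fin (m+3)) : ℕ) = if (y:ℕ) ≤ (i₀:ℕ) then (y:ℕ) else (y:ℕ)+1 := by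
  unfold sig; split_ifs <;> rfl

lemma sig_ne (y : Fin (m+2)) : ((sig i₀ y : Fin (m+3)) : ℕ) ≠ (i₀:ℕ)+1 := by
  rw [sig_coe]; split_ifs <;> omega

lemma rho_sig (y : Fin (m+2)) : rho i₀ (sig i₀ y) = y := by
  apply Fin.ext
  rw [rho_coe, sig_coe]
  have := y.isLt
  split_ifs <;> omega

lemma sig_rho (x : Fin (m+3)) (hx : (x:ℕ) ≠ (i₀:ℕ)+1) : sig i₀ (rho i₀ x) = x := by
  apply Fin.ext
  rw [sig_coe, rho_coe]
  have := x.isLt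
  split_ifs <;> omega

lemma succAbove_coe (k : Fin m) :
    ((i₀.succAbove k : Fin (m+1)) : ℕ) = if (k:ℕ) < (i₀:ℕ) then (k:ℕ) else (k:ℕ)+1 := by
  by_cases h : (k:ℕ) < (i₀:ℕ)
  · rw [Fin.succAbove_of_castSucc_lt _ _ (by simpa [Fin.lt_def] using h), if_pos h]
    rfl
  · rw [Fin.succAbove_of_le_castSucc _ _ (by simpa [Fin.le_def] using not_lt.mp h), if_neg h]
    rfl

lemma rho_eq_iff (x : Fin (m+3)) (hx : (x:ℕ) ≠ (i₀:ℕ)+1) (k : Fin m) :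
    (x:ℕ) = ((i₀.succAbove k : Fin (m+1)) : ℕ) + 1 ↔ ((rho i₀ x : Fin (m+2)) : ℕ) = (k:ℕ) + 1 := by
  rw [rho_coe, succAbove_coe]
  have := x.isLt
  have := i₀.isLt
  have := k.isLt
  split_ifs <;> omega

lemma rho_le_iff (x : Fin (m+3)) (hx : (x:ℕ) ≠ (i₀:ℕ)+1) (k : Fin m) :
    (x:ℕ) ≤ ((i₀.succAbove k : Fin (m+1)) : ℕ) + 1 ↔ ((rho i₀ x : Fin (m+2)) : ℕ) ≤ (k:ℕ) + 1 := by
  rw [rho_coe, succAbove_coe]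
  have := x.isLt
  have := i₀.isLt
  have := k.isLt
  split_ifs <;> omega

lemma filter_succAbove_card (T : Finset (Fin (m+1))) (hi₀ : i₀ ∉ T) :
    (univ.filter fun k => i₀.succAbove k ∈ T).card = T.card := by
  classical
  apply Finset.card_bij (fun k _ => i₀.succAbove k)
  · intro k hk
    exact (Finset.mem_filter.mp hk).2
  · intro k₁ _ k₂ _ h
    exact Fin.succAbove_right_injective h
  · intro t ht
    obtain ⟨k, hk⟩ := Fin.exists_succAbove_eq (show t ≠ i₀ from fun h => hi₀ (h ▸ ht))
    exact ⟨k, Finset.mem_filter.mpr ⟨Finset.mem_univ _, hk ▸ ht⟩, hk⟩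

lemma card_remove (n : ℕ) (T : Finset (Fin (m+1))) (hi₀ : i₀ ∉ T) :
    Nat.card {c : Cfg (m+1) n T // (c.1.1 i₀ : ℕ) = n + 1}
      = Nat.card (Cfg m n (univ.filter fun k => i₀.succAbove k ∈ T)) := by
  classical
  apply Nat.card_congr
  have vne : ∀ (c : Cfg (m+1) n T), (c.1.1 i₀ : ℕ) = n + 1 →
      ∀ j : Fin n, ((c.1.2 j : Fin (m+3)) : ℕ) ≠ (i₀:ℕ) + 1 := by
    intro c hc j hj
    have h2 := (c.2.1 i₀ j).2 hj
    have := j.isLt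
    omega
  refine
    { toFun := fun c =>
        ⟨(fun k => c.1.1.1 (i₀.succAbove k), fun j => rho i₀ (c.1.1.2 j)), ?_, ?_⟩
      invFun := fun d =>
        ⟨⟨(i₀.insertNth ⟨n+1, by omega⟩ d.1.1, fun j => sig i₀ (d.1.2 j)), ?_, ?_⟩, ?_⟩
      left_inv := ?_
      right_inv := ?_ }
  · -- Ok for forward map
    intro k j
    have hne := vne c.1 c.2 j
    constructor
    · intro hh
      exact (rho_le_iff i₀ _ hne k).mp ((c.1.2.1 (i₀.succAbove k) j).1 hh)
    · intro hv
      exact (c.1.2.1 (i₀.succAbove k) j).2 ((rho_eq_iff i₀ _ hne k).mpr hv)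
  · -- T constraint forward
    intro k hk
    exact c.1.2.2 (i₀.succAbove k) (Finset.mem_filter.mp hk).2
  · -- Ok for inverse map
    intro i j
    dsimp only
    by_cases hii : i = i₀
    · rw [hii, Fin.insertNth_apply_same]
      constructor
      · intro hh
        have hj := j.isLt
        have hh' : (n:ℕ)+1 = (j:ℕ)+1 := hh
        omega
      · intro hv
        exact absurd hv (sig_ne i₀ _)
    · obtain ⟨k, rfl⟩ := Fin.exists_succAbove_eq hii
      rw [Fin.insertNth_apply_succAbove]
      have hne := sig_ne i₀ (d.1.2 j)
      constructor
      · intro hh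
        have h1 := (d.2.1 k j).1 hh
        rw [rho_le_iff i₀ _ hne k, rho_sig]
        exact h1
      · intro hv
        apply (d.2.1 k j).2
        have := (rho_eq_iff i₀ _ hne k).mp hv
        rwa [rho_sig] at this
  · -- T constraint inverse
    intro i hiT
    have hii : i ≠ i₀ := fun h => hi₀ (h ▸ hiT)
    obtain ⟨k, rfl⟩ := Fin.exists_succAbove_eq hii
    dsimp only
    rw [Fin.insertNth_apply_succAbove]
    exact d.2.2 k (Finset.mem_filter.mpr ⟨Finset.mem_univ _, hiT⟩)
  · -- top value at i₀
    dsimp only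
    rw [Fin.insertNth_apply_same]
  · -- left inverse
    intro c
    apply Subtype.ext
    apply Subtype.ext
    apply Prod.ext
    · funext i
      dsimp only
      by_cases hii : i = i₀
      · rw [hii, Fin.insertNth_apply_same]
        apply Fin.ext
        exact c.2.symm
      · obtain ⟨k, rfl⟩ := Fin.exists_succAbove_eq hii
        rw [Fin.insertNth_apply_succAbove]
    · funext j
      exact sig_rho i₀ _ (vne c.1 c.2 j)
  · -- right inverse
    intro d
    apply Subtype.ext
    apply Prod.ext
    · funext k
      dsimp only
      rw [Fin.insertNth_apply_succAbove]
    · funext j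
      exact rho_sig i₀ _

end Remove

section Column

lemma card_fiber_split (m n : ℕ) :
    Nat.card (Cfg m (n+1) (univ : Finset (Fin m)))
      = ∑ x : Fin (m+2),
          Nat.card {c : Cfg m (n+1) (univ : Finset (Fin m)) // c.1.2 (Fin.last n) = x} := by
  rw [← card_sigma_fin]
  exact (Nat.card_congr (Equiv.sigmaFiberEquiv
    (fun c : Cfg m (n+1) (univ : Finset (Fin m)) => c.1.2 (Fin.last n)))).symm

lemma card_fiber (m n : ℕ) (x : Fin (m+2)) :
    Nat.card {c : Cfg m (n+1) (univ : Finset (Fin m)) // c.1.2 (Fin.last n) = x}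
      = Nat.card (Cfg m n (univ.filter fun i : Fin m => (i:ℕ)+1 < (x:ℕ))) := by
  classical
  apply Nat.card_congr
  refine
    { toFun := fun c =>
        ⟨(fun i => ⟨((c.1.1.1 i : ℕ)), ?_⟩, fun j => c.1.1.2 j.castSucc), ?_, ?_⟩
      invFun := fun d =>
        ⟨⟨(fun i => (d.1.1 i).castSucc, Fin.snoc d.1.2 x), ?_, ?_⟩, ?_⟩
      left_inv := ?_
      right_inv := ?_ }
  · -- h value bound
    have := c.1.2.2 i (Finset.mem_univ i)
    omega
  · -- Ok forward
    intro i j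
    have horig := c.1.2.1 i j.castSucc
    simpa using horig
  · -- Lset constraint forward
    intro i hi
    simp only [Finset.mem_filter] at hi
    dsimp only
    by_contra hcon
    push_neg at hcon
    have hval : (c.1.1.1 i : ℕ) = n + 1 := by
      have := c.1.2.2 i (Finset.mem_univ i)
      omega
    have h1 := (c.1.2.1 i (Fin.last n)).1 (by simpa using hval)
    rw [c.2] at h1
    omega
  · -- Ok inverse
    intro i j
    dsimp only
    refine Fin.lastCases ?_ ?_ j
    · rw [Fin.snoc_last]
      constructor
      · intro hh
        simp only [Fin.coe_castSucc, Fin.val_last] at hh ⊢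
        by_contra hcon
        push_neg at hcon
        have hmem : i ∈ univ.filter fun i : Fin m => (i:ℕ)+1 < (x:ℕ) :=
          Finset.mem_filter.mpr ⟨Finset.mem_univ _, by omega⟩
        have := d.2.2 i hmem
        omega
      · intro _
        simp only [Fin.coe_castSucc, Fin.val_last]
        have := (d.1.1 i).isLt
        omega
    · intro j'
      rw [Fin.snoc_castSucc]
      have horig := d.2.1 i j'
      simpa using horig
  · -- univ constraint inverse
    intro i _
    dsimp only
    simp only [Fin.coe_castSucc]
    have := (d.1.1 i).isLt
    omega
  · -- fiber condition
    dsimp only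
    rw [Fin.snoc_last]
  · -- left inverse
    intro c
    apply Subtype.ext
    apply Subtype.ext
    apply Prod.ext
    · funext i
      apply Fin.ext
      rfl
    · funext j
      dsimp only
      refine Fin.lastCases ?_ ?_ j
      · rw [Fin.snoc_last]
        exact c.2.symm
      · intro j'
        rw [Fin.snoc_castSucc]
  · -- right inverse
    intro d
    apply Subtype.ext
    apply Prod.ext
    · funext i
      apply Fin.ext
      rfl
    · funext j
      dsimp only
      rw [Fin.snoc_castSucc]

end Column


lemma Lset_card (m : ℕ) (x : Fin (m+2)) :
    (univ.filter fun i : Fin m => (i:ℕ)+1 < (x:ℕ)).card = (x:ℕ) - 1 := by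
  classical
  have hx := x.isLt
  rw [show (x:ℕ) - 1 = (Finset.range ((x:ℕ)-1)).card from (Finset.card_range _).symm]
  apply Finset.card_bij (fun (i : Fin m) _ => (i : ℕ))
  · intro i hi
    simp only [Finset.mem_filter] at hi
    simp only [Finset.mem_range]
    omega
  · intro i₁ _ i₂ _ h
    exact Fin.ext h
  · intro a ha
    simp only [Finset.mem_range] at ha
    refine ⟨⟨a, by omega⟩, ?_, rfl⟩
    simp only [Finset.mem_filter]
    exact ⟨Finset.mem_univ _, show a + 1 < (x:ℕ) by omega⟩

lemma gv_zero_s (m n : ℕ) : gv m 0 n = qf m n := by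
  unfold gv
  simp

lemma card_cfg : ∀ (n m : ℕ) (T : Finset (Fin m)),
    ((Nat.card (Cfg m n T)) : ℤ) = gv m (m - T.card) n := by
  intro n
  induction n using Nat.strong_induction_on with
  | _ n ihn =>
  have huniv : ∀ m : ℕ, ((Nat.card (Cfg m n (univ : Finset (Fin m)))) : ℤ) = gv m 0 n := by
    intro m
    cases n with
    | zero =>
      rw [card_cfg_zero, Finset.card_univ, Fintype.card_fin, Nat.sub_self, pow_zero]
      rw [gv_base]
      norm_num
    | succ n' =>
      rw [card_fiber_split, Nat.cast_sum]
      have hx : ∀ x : Fin (m+2),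
          ((Nat.card {c : Cfg m (n'+1) (univ : Finset (Fin m)) //
              c.1.2 (Fin.last n') = x}) : ℤ)
          = gv m (m - ((x:ℕ) - 1)) n' := by
        intro x
        rw [card_fiber, ihn n' (by omega) m _, Lset_card]
      rw [Finset.sum_congr rfl (fun x _ => hx x)]
      rw [Fin.sum_univ_eq_sum_range (fun x => gv m (m - (x - 1)) n') (m+2)]
      rw [sum_range_succ' (fun x => gv m (m - (x-1)) n') (m+1)]
      rw [gv_zero_s, gv_V2 m n']
      simp only [Nat.add_sub_cancel, Nat.zero_sub, Nat.sub_zero]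
      ring
  suffices H : ∀ (k m : ℕ) (T : Finset (Fin m)), m - T.card ≤ k →
      ((Nat.card (Cfg m n T)) : ℤ) = gv m (m - T.card) n by
    intro m T
    exact H (m - T.card) m T le_rfl
  intro k
  induction k with
  | zero =>
    intro m T hk
    have hle : T.card ≤ m := by
      have := Finset.card_le_univ T
      simpa using this
    have hT : T = univ := Finset.eq_univ_of_card T (by simp; omega)
    subst hT
    rw [Finset.card_univ, Fintype.card_fin, Nat.sub_self]
    exact huniv m
  | succ k ihk =>
    intro m T hk
    have hle : T.card ≤ m := by
      have := Finset.card_le_univ T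
      simpa using this
    by_cases hT : T.card = m
    · have hTu : T = univ := Finset.eq_univ_of_card T (by simp [hT])
      subst hTu
      rw [Finset.card_univ, Fintype.card_fin, Nat.sub_self]
      exact huniv m
    · have hlt : T.card < m := lt_of_le_of_ne hle hT
      have hne : T ≠ univ := fun h => hT (by rw [h, Finset.card_univ, Fintype.card_fin])
      obtain ⟨i₀, hi₀⟩ : ∃ i₀, i₀ ∉ T := by
        by_contra hcon
        push_neg at hcon
        exact hne (Finset.eq_univ_iff_forall.mpr hcon)
      match m, T, i₀, hlt, hi₀, hk with
      | (m'+1), T, i₀, hlt, hi₀, hk =>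
      rw [card_split (m'+1) n T i₀ hi₀]
      push_cast
      rw [card_remove i₀ n T hi₀]
      rw [ihk (m'+1) (insert i₀ T)
        (by rw [Finset.card_insert_of_notMem hi₀]; omega)]
      rw [ihk m' (univ.filter fun k => i₀.succAbove k ∈ T)
        (by rw [filter_succAbove_card i₀ T hi₀]; omega)]
      rw [Finset.card_insert_of_notMem hi₀, filter_succAbove_card i₀ T hi₀]
      have hs : m'+1 - T.card = (m' - T.card) + 1 := by omega
      rw [hs, (by omega : m'+1 - (T.card+1) = m' - T.card)]
      exact (gv_V1 m' (m' - T.card) n).symm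

section SatEquiv

variable {m n : ℕ}

lemma satCover_ext {S S' : SatCover m n} (hH : S.H = S'.H) (hV : S.V = S'.V) : S = S' := by
  cases S; cases S'
  cases hH; cases hV
  rfl

def hval (S : SatCover m n) (i : Fin m) : Fin (n+2) :=
  ⟨((Finset.range (n+1)).filter fun j => S.H i j = true).card, by
    have h := Finset.card_filter_le (Finset.range (n+1)) (fun j => S.H i j = true)
    rw [Finset.card_range] at h
    omega⟩

def vval (S : SatCover m n) (j : Fin n) : Fin (m+2) :=
  ⟨((Finset.range (m+1)).filter fun i => S.V i j = true).card, by
    have h := Finset.card_filter_le (Finset.range (m+1)) (fun i => S.V i j = true)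
    rw [Finset.card_range] at h
    omega⟩

lemma hval_iff (S : SatCover m n) (i : Fin m) (j : ℕ) (hj : j ≤ n) :
    S.H i j = true ↔ j < (hval S i : ℕ) := by
  constructor
  · intro hH
    have hsub : Finset.range (j+1) ⊆ (Finset.range (n+1)).filter fun j' => S.H i j' = true := by
      intro k hk
      simp only [Finset.mem_range] at hk
      simp only [Finset.mem_filter, Finset.mem_range]
      refine ⟨by omega, ?_⟩
      rcases Nat.lt_or_ge k j with h | h
      · exact S.H_down i j k h hH
      · have hkj : k = j := by omega
        rw [hkj]; exact hH
    have hc := Finset.card_le_card hsub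
    rw [Finset.card_range] at hc
    have hdef : (hval S i : ℕ) = ((Finset.range (n+1)).filter fun j' => S.H i j' = true).card := rfl
    omega
  · intro hlt
    by_contra hH
    have hsub : ((Finset.range (n+1)).filter fun j' => S.H i j' = true) ⊆ Finset.range j := by
      intro k hk
      simp only [Finset.mem_filter, Finset.mem_range] at hk
      simp only [Finset.mem_range]
      by_contra hkj
      push_neg at hkj
      rcases Nat.eq_or_lt_of_le hkj with h | h
      · exact hH (h ▸ hk.2)
      · exact hH (S.H_down i k j h hk.2)
    have hc := Finset.card_le_card hsub
    rw [Finset.card_range] at hc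
    have hdef : (hval S i : ℕ) = ((Finset.range (n+1)).filter fun j' => S.H i j' = true).card := rfl
    omega

lemma vval_iff (S : SatCover m n) (j : Fin n) (i : ℕ) (hi : i ≤ m) :
    S.V i j = true ↔ i < (vval S j : ℕ) := by
  constructor
  · intro hV
    have hsub : Finset.range (i+1) ⊆ (Finset.range (m+1)).filter fun i' => S.V i' j = true := by
      intro k hk
      simp only [Finset.mem_range] at hk
      simp only [Finset.mem_filter, Finset.mem_range]
      refine ⟨by omega, ?_⟩
      rcases Nat.lt_or_ge k i with h | h
      · exact S.V_left i j k h hV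
      · have hki : k = i := by omega
        rw [hki]; exact hV
    have hc := Finset.card_le_card hsub
    rw [Finset.card_range] at hc
    have hdef : (vval S j : ℕ) = ((Finset.range (m+1)).filter fun i' => S.V i' j = true).card := rfl
    omega
  · intro hlt
    by_contra hV
    have hsub : ((Finset.range (m+1)).filter fun i' => S.V i' j = true) ⊆ Finset.range i := by
      intro k hk
      simp only [Finset.mem_filter, Finset.mem_range] at hk
      simp only [Finset.mem_range]
      by_contra hki
      push_neg at hki
      rcases Nat.eq_or_lt_of_le hki with h | h
      · exact hV (h ▸ hk.2)
      · exact hV (S.V_left k j i h hk.2)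
    have hc := Finset.card_le_card hsub
    rw [Finset.card_range] at hc
    have hdef : (vval S j : ℕ) = ((Finset.range (m+1)).filter fun i' => S.V i' j = true).card := rfl
    omega

lemma ok_of (S : SatCover m n) : Ok m n (hval S) (vval S) := by
  intro i j
  have hiv := i.isLt
  have hjv := j.isLt
  constructor
  · intro hh
    by_contra hcon
    push_neg at hcon
    have hVi : S.V i j = true := by
      rw [vval_iff S j i (by omega)]
      omega
    have hVi1 : S.V (i+1) j = true := by
      rw [vval_iff S j (i+1) (by omega)]
      omega
    have hHj : S.H i j = true := by
      rw [hval_iff S i j (by omega)]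
      omega
    have := S.sq₃ i j hHj hVi hVi1
    rw [hval_iff S i (j+1) (by omega)] at this
    omega
  · intro hv
    by_contra hcon
    push_neg at hcon
    have hHj : S.H i j = true := by
      rw [hval_iff S i j (by omega)]
      omega
    have hHj1 : S.H i (j+1) = true := by
      rw [hval_iff S i (j+1) (by omega)]
      omega
    have hVi : S.V i j = true := by
      rw [vval_iff S j i (by omega)]
      omega
    have := S.sq₁ i j hHj hHj1 hVi
    rw [vval_iff S j (i+1) (by omega)] at this
    omega

def mkSat (p : (Fin m → Fin (n+2)) × (Fin n → Fin (m+2))) (hok : Ok m n p.1 p.2) :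
    SatCover m n where
  H := fun i j => if hi : i < m then decide (j < (p.1 ⟨i, hi⟩ : ℕ)) else false
  V := fun i j => if hj : j < n then decide (i < (p.2 ⟨j, hj⟩ : ℕ)) else false
  H_bound := by
    intro i j hij
    by_cases hi : i < m
    · rw [dif_pos hi] at hij
      have := (p.1 ⟨i, hi⟩).isLt
      simp only [decide_eq_true_eq] at hij
      omega
    · rw [dif_neg hi] at hij
      exact absurd hij (by simp)
  V_bound := by
    intro i j hij
    by_cases hj : j < n
    · rw [dif_pos hj] at hij
      have := (p.2 ⟨j, hj⟩).isLt
      simp only [decide_eq_true_eq] at hij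
      omega
    · rw [dif_neg hj] at hij
      exact absurd hij (by simp)
  H_down := by
    intro i j k hkj hij
    by_cases hi : i < m
    · rw [dif_pos hi] at hij ⊢
      simp only [decide_eq_true_eq] at hij ⊢
      omega
    · rw [dif_neg hi] at hij
      exact absurd hij (by simp)
  V_left := by
    intro i j k hki hij
    by_cases hj : j < n
    · rw [dif_pos hj] at hij ⊢
      simp only [decide_eq_true_eq] at hij ⊢
      omega
    · rw [dif_neg hj] at hij
      exact absurd hij (by simp)
  sq₁ := by
    intro i j h1 h2 h3
    by_cases hi : i < m
    · by_cases hj : j < n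
      · rw [dif_pos hi] at h2
        rw [dif_pos hj] at h3 ⊢
        simp only [decide_eq_true_eq] at h2 h3 ⊢
        by_contra hcon
        push_neg at hcon
        have heq : (p.2 ⟨j, hj⟩ : ℕ) = i + 1 := by omega
        have h4 := (hok ⟨i, hi⟩ ⟨j, hj⟩).2 heq
        have e2 : ((⟨j, hj⟩ : Fin n) : ℕ) = j := rfl
        omega
      · rw [dif_neg hj] at h3
        exact absurd h3 (by simp)
    · rw [dif_neg hi] at h2
      exact absurd h2 (by simp)
  sq₂ := by
    intro i j h1 h2 h3
    by_cases hj : j < n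
    · rw [dif_pos hj] at h3 ⊢
      simp only [decide_eq_true_eq] at h3 ⊢
      omega
    · rw [dif_neg hj] at h3
      exact absurd h3 (by simp)
  sq₃ := by
    intro i j h1 h2 h3
    by_cases hi : i < m
    · by_cases hj : j < n
      · rw [dif_pos hi] at h1 ⊢
        rw [dif_pos hj] at h2 h3
        simp only [decide_eq_true_eq] at h1 h2 h3 ⊢
        by_contra hcon
        push_neg at hcon
        have heq : (p.1 ⟨i, hi⟩ : ℕ) = j + 1 := by omega
        have h4 := (hok ⟨i, hi⟩ ⟨j, hj⟩).1 heq
        have e1 : ((⟨i, hi⟩ : Fin m) : ℕ) = i := rfl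
        omega
      · rw [dif_neg hj] at h2
        exact absurd h2 (by simp)
    · rw [dif_neg hi] at h1
      exact absurd h1 (by simp)
  sq₄ := by
    intro i j h1 h2 h3
    by_cases hi : i < m
    · rw [dif_pos hi] at h1 ⊢
      simp only [decide_eq_true_eq] at h1 ⊢
      omega
    · rw [dif_neg hi] at h1
      exact absurd h1 (by simp)

lemma range_filter_lt (c N : ℕ) :
    ((Finset.range N).filter fun j => j < c) = Finset.range (min c N) := by
  ext j
  simp only [Finset.mem_filter, Finset.mem_range, Nat.lt_min]
  tauto

def satEquiv : SatCover m n ≃ Cfg m n (∅ : Finset (Fin m)) where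
  toFun S := ⟨(hval S, vval S), ok_of S, fun i hi => absurd hi (Finset.notMem_empty i)⟩
  invFun c := mkSat c.1 c.2.1
  left_inv := by
    intro S
    apply satCover_ext
    · funext i j
      show (if hi : i < m then decide (j < (hval S ⟨i, hi⟩ : ℕ)) else false) = S.H i j
      split_ifs with hi
      · by_cases hj : j ≤ n
        · rcases Bool.eq_false_or_eq_true (S.H i j) with hb | hb
          · rw [hb]
            simp only [decide_eq_true_eq]
            exact (hval_iff S ⟨i, hi⟩ j hj).mp hb
          · rw [hb]
            simp only [decide_eq_false_iff_not]
            intro hcon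
            have hT := (hval_iff S ⟨i, hi⟩ j hj).mpr hcon
            rw [hT] at hb
            simp at hb
        · have hS : S.H i j = false := by
            rcases Bool.eq_false_or_eq_true (S.H i j) with hb | hb
            · exact absurd ((S.H_bound i j hb).2) (by omega)
            · exact hb
          rw [hS]
          simp only [decide_eq_false_iff_not]
          have := (hval S ⟨i, hi⟩).isLt
          omega
      · rcases Bool.eq_false_or_eq_true (S.H i j) with hb | hb
        · exact absurd ((S.H_bound i j hb).1) hi
        · rw [hb]
    · funext i j
      show (if hj : j < n then decide (i < (vval S ⟨j, hj⟩ : ℕ)) else false) = S.V i j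
      split_ifs with hj
      · by_cases hi : i ≤ m
        · rcases Bool.eq_false_or_eq_true (S.V i j) with hb | hb
          · rw [hb]
            simp only [decide_eq_true_eq]
            exact (vval_iff S ⟨j, hj⟩ i hi).mp hb
          · rw [hb]
            simp only [decide_eq_false_iff_not]
            intro hcon
            have hT := (vval_iff S ⟨j, hj⟩ i hi).mpr hcon
            rw [hT] at hb
            simp at hb
        · have hS : S.V i j = false := by
            rcases Bool.eq_false_or_eq_true (S.V i j) with hb | hb
            · exact absurd ((S.V_bound i j hb).1) (by omega)
            · exact hb
          rw [hS]
          simp only [decide_eq_false_iff_not]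
          have := (vval S ⟨j, hj⟩).isLt
          omega
      · rcases Bool.eq_false_or_eq_true (S.V i j) with hb | hb
        · exact absurd ((S.V_bound i j hb).2) hj
        · rw [hb]
  right_inv := by
    intro c
    apply Subtype.ext
    apply Prod.ext
    · funext i
      apply Fin.ext
      show (((Finset.range (n+1)).filter fun j =>
        (if hi : (i:ℕ) < m then decide (j < (c.1.1 ⟨(i:ℕ), hi⟩ : ℕ)) else false) = true).card) = _
      have hi : (i:ℕ) < m := i.isLt
      have hfun : ∀ j : ℕ, ((if hi : (i:ℕ) < m then decide (j < (c.1.1 ⟨(i:ℕ), hi⟩ : ℕ))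
          else false) = true) ↔ (j < (c.1.1 i : ℕ)) := by
        intro j
        rw [dif_pos hi]
        simp only [decide_eq_true_eq]
      rw [Finset.filter_congr (fun j _ => by rw [hfun j]), range_filter_lt]
      rw [Finset.card_range]
      have := (c.1.1 i).isLt
      omega
    · funext j
      apply Fin.ext
      show (((Finset.range (m+1)).filter fun i =>
        (if hj : (j:ℕ) < n then decide (i < (c.1.2 ⟨(j:ℕ), hj⟩ : ℕ)) else false) = true).card) = _
      have hj : (j:ℕ) < n := j.isLt
      have hfun : ∀ i : ℕ, ((if hj : (j:ℕ) < n then decide (i < (c.1.2 ⟨(j:ℕ), hj⟩ : ℕ))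
          else false) = true) ↔ (i < (c.1.2 j : ℕ)) := by
        intro i
        rw [dif_pos hj]
        simp only [decide_eq_true_eq]
      rw [Finset.filter_congr (fun i _ => by rw [hfun i]), range_filter_lt]
      rw [Finset.card_range]
      have := (c.1.2 j).isLt
      omega

end SatEquiv

end SatAux

theorem stmt_2 (m n : ℕ) :
    (satCount m n : ℤ) =
      ∑ j ∈ Finset.Icc 2 (m + 2),
        (-1 : ℤ) ^ (m + j) * stirling (m + 1) (j - 1) * ((Nat.factorial j / 2 : ℕ) : ℤ) *
          (j : ℤ) ^ n := by
  have h1 : satCount m n = Nat.card (SatAux.Cfg m n (∅ : Finset (Fin m))) :=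
    Nat.card_congr SatAux.satEquiv
  rw [h1, SatAux.card_cfg n m ∅]
  rw [Finset.card_empty, Nat.sub_zero]
  rw [SatAux.gv_final m n]
  rfl
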